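/- Let p be a nonzero integer and let s₀ ∈ ℂ with s₀ ∉ {0, 1, −1} satisfy A_{4_1}(s₀^{−p}, s₀) = 0, where A_{4_1}(L,M) = L²M⁴ + L(−M⁸ − 1 + M⁶ + M² + 2M⁴) + M⁴. Then the complex number 2(s₀² − s₀ + 1)/(s₀ − 1)² is an algebraic integer. -/

import Mathlib

open Polynomial Finset

private lemma dickson_eval_two' (n : ℕ) : (Polynomial.dickson 1 (1:ℤ) n).eval 2 = 2 := by
  have h := Polynomial.dickson_one_one_eval_add_inv (1:ℤ) 1 (by norm_num) n
  norm_num at h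
  exact h

private lemma dickson_deriv_two' : ∀ n : ℕ,
    (Polynomial.derivative (Polynomial.dickson 1 (1:ℤ) n)).eval 2 = (n:ℤ)^2 := by
  intro n
  induction n using Nat.twoStepInduction with
  | zero => simp [Polynomial.dickson_zero]
  | one => simp [Polynomial.dickson_one]
  | more n ih1 ih2 =>
    rw [Polynomial.dickson_add_two]
    simp only [derivative_sub, derivative_mul, Polynomial.derivative_X, Polynomial.C_1, one_mul,
      Polynomial.eval_sub, Polynomial.eval_add, Polynomial.eval_mul, Polynomial.eval_X,
      derivative_one, zero_mul, ih1, ih2, dickson_eval_two']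
    push_cast
    ring

private lemma sum_zero_of_root' (G : Polynomial ℤ) (w v : ℂ) (hwv : w * v = 2)
    (hev : (G.map (Int.castRingHom ℂ)).eval w = 0) :
    ∑ k ∈ Finset.range (G.natDegree + 1),
      (G.coeff k : ℂ) * 2 ^ k * v ^ (G.natDegree - k) = 0 := by
  have h1 : (G.map (Int.castRingHom ℂ)).eval w
      = ∑ k ∈ Finset.range (G.natDegree + 1), (G.coeff k : ℂ) * w ^ k := by
    rw [Polynomial.eval_eq_sum_range' (Nat.lt_succ_of_le Polynomial.natDegree_map_le)]
    exact Finset.sum_congr rfl fun k _ => by rw [Polynomial.coeff_map]; rfl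
  calc ∑ k ∈ Finset.range (G.natDegree + 1), (G.coeff k : ℂ) * 2 ^ k * v ^ (G.natDegree - k)
      = ∑ k ∈ Finset.range (G.natDegree + 1), ((G.coeff k : ℂ) * w ^ k) * v ^ G.natDegree := by
        refine Finset.sum_congr rfl fun k hk => ?_
        have hk' : k ≤ G.natDegree := Nat.lt_succ_iff.mp (Finset.mem_range.mp hk)
        have h2 : (2:ℂ) ^ k = w ^ k * v ^ k := by rw [← mul_pow, hwv]
        calc (G.coeff k : ℂ) * 2 ^ k * v ^ (G.natDegree - k)
            = (G.coeff k : ℂ) * w ^ k * (v ^ k * v ^ (G.natDegree - k)) := by rw [h2]; ring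
          _ = (G.coeff k : ℂ) * w ^ k * v ^ G.natDegree := by rw [pow_mul_pow_sub v hk']
    _ = (∑ k ∈ Finset.range (G.natDegree + 1), (G.coeff k : ℂ) * w ^ k) * v ^ G.natDegree := by
        rw [Finset.sum_mul]
    _ = 0 := by rw [← h1, hev, zero_mul]

private lemma isIntegral_of_c0_one' (G : Polynomial ℤ) (w v : ℂ) (hwv : w * v = 2)
    (hev : (G.map (Int.castRingHom ℂ)).eval w = 0) (hc0 : G.coeff 0 = 1) :
    IsIntegral ℤ v := by
  set m := G.natDegree with hm
  refine ⟨Polynomial.X ^ m + ∑ j ∈ Finset.range m,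
      Polynomial.C (2 ^ (m - j) * G.coeff (m - j)) * Polynomial.X ^ j, ?_, ?_⟩
  · apply Polynomial.monic_X_pow_add
    apply lt_of_le_of_lt (Polynomial.degree_sum_le _ _)
    rw [Finset.sup_lt_iff (by exact_mod_cast WithBot.bot_lt_coe m)]
    intro j hj
    exact lt_of_le_of_lt (Polynomial.degree_C_mul_X_pow_le _ _)
      (by exact_mod_cast Finset.mem_range.mp hj)
  · have hsum := sum_zero_of_root' G w v hwv hev
    rw [Finset.sum_range_succ'] at hsum
    simp only [eval₂_add, eval₂_X_pow, eval₂_finset_sum, eval₂_mul, eval₂_C]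
    simp only [eq_intCast]
    rw [← Finset.sum_range_reflect]
    have hcg : ∀ j ∈ Finset.range m,
        ((2 ^ (m - (m - 1 - j)) * G.coeff (m - (m - 1 - j)) : ℤ) : ℂ) * v ^ (m - 1 - j)
        = (G.coeff (j + 1) : ℂ) * 2 ^ (j + 1) * v ^ (m - (j + 1)) := by
      intro j hj
      have hj' := Finset.mem_range.mp hj
      have e1 : m - (m - 1 - j) = j + 1 := by omega
      have e2 : m - 1 - j = m - (j + 1) := by omega
      rw [e1, e2]
      push_cast
      ring
    rw [Finset.sum_congr rfl hcg]
    have h0' : (G.coeff 0 : ℂ) * 2 ^ 0 * v ^ (m - 0) = v ^ m := by rw [hc0]; simp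
    rw [h0'] at hsum
    linear_combination hsum

private lemma isIntegral_of_c0_four' (G : Polynomial ℤ) (w v : ℂ) (d : ℤ) (hwv : w * v = 2)
    (hev : (G.map (Int.castRingHom ℂ)).eval w = 0) (hc0 : G.coeff 0 = 4)
    (hc1 : G.coeff 1 = 2 * d) : IsIntegral ℤ v := by
  have hm1 : 1 ≤ G.natDegree := by
    by_contra h
    push_neg at h
    have hG : G = Polynomial.C (G.coeff 0) := Polynomial.eq_C_of_natDegree_eq_zero (by omega)
    rw [hG, hc0] at hev
    simp at hev
  obtain ⟨m', hm'⟩ : ∃ m', G.natDegree = m' + 1 := ⟨G.natDegree - 1, by omega⟩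
  refine ⟨Polynomial.X ^ (m' + 1) + (Polynomial.C d * Polynomial.X ^ m' + ∑ j ∈ Finset.range m',
      Polynomial.C (2 ^ (m' - j - 1) * G.coeff (m' + 1 - j)) * Polynomial.X ^ j), ?_, ?_⟩
  · apply Polynomial.monic_X_pow_add
    apply lt_of_le_of_lt (Polynomial.degree_add_le _ _)
    apply max_lt
    · exact lt_of_le_of_lt (Polynomial.degree_C_mul_X_pow_le _ _)
        (by exact_mod_cast Nat.lt_succ_self m')
    · apply lt_of_le_of_lt (Polynomial.degree_sum_le _ _)
      rw [Finset.sup_lt_iff (by exact_mod_cast WithBot.bot_lt_coe (m' + 1))]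
      intro j hj
      exact lt_of_le_of_lt (Polynomial.degree_C_mul_X_pow_le _ _)
        (by exact_mod_cast Nat.lt_succ_of_lt (Finset.mem_range.mp hj))
  · have hsum := sum_zero_of_root' G w v hwv hev
    rw [hm'] at hsum
    rw [Finset.sum_range_succ', Finset.sum_range_succ'] at hsum
    simp only [eval₂_add, eval₂_X_pow, eval₂_finset_sum, eval₂_mul, eval₂_C]
    simp only [eq_intCast]
    suffices h4 : (4:ℂ) * (v ^ (m' + 1) + ((d:ℂ) * v ^ m' + ∑ j ∈ Finset.range m',
        ((2 ^ (m' - j - 1) * G.coeff (m' + 1 - j) : ℤ) : ℂ) * v ^ j)) = 0 by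
      rcases mul_eq_zero.mp h4 with h | h
      · norm_num at h
      · exact h
    have hrefl := Finset.sum_range_reflect
      (fun j => (4:ℂ) * (((2 ^ (m' - j - 1) * G.coeff (m' + 1 - j) : ℤ) : ℂ) * v ^ j)) m'
    have hcg : ∀ k ∈ Finset.range m',
        (4:ℂ) * (((2 ^ (m' - (m' - 1 - k) - 1) * G.coeff (m' + 1 - (m' - 1 - k)) : ℤ) : ℂ)
          * v ^ (m' - 1 - k))
        = (G.coeff (k + 1 + 1) : ℂ) * 2 ^ (k + 1 + 1) * v ^ (m' + 1 - (k + 1 + 1)) := by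
      intro k hk
      have hk' := Finset.mem_range.mp hk
      have e1 : m' - (m' - 1 - k) - 1 = k := by omega
      have e2 : m' + 1 - (m' - 1 - k) = k + 1 + 1 := by omega
      have e3 : m' - 1 - k = m' + 1 - (k + 1 + 1) := by omega
      rw [e1, e2, e3]
      push_cast
      ring
    have hS : ∑ j ∈ Finset.range m',
        (4:ℂ) * (((2 ^ (m' - j - 1) * G.coeff (m' + 1 - j) : ℤ) : ℂ) * v ^ j)
        = ∑ k ∈ Finset.range m', (G.coeff (k + 1 + 1) : ℂ) * 2 ^ (k + 1 + 1)
            * v ^ (m' + 1 - (k + 1 + 1)) := by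
      rw [← hrefl]
      exact Finset.sum_congr rfl hcg
    calc (4:ℂ) * (v ^ (m' + 1) + ((d:ℂ) * v ^ m' + ∑ j ∈ Finset.range m',
          ((2 ^ (m' - j - 1) * G.coeff (m' + 1 - j) : ℤ) : ℂ) * v ^ j))
        = (∑ k ∈ Finset.range m', (G.coeff (k + 1 + 1) : ℂ) * 2 ^ (k + 1 + 1)
            * v ^ (m' + 1 - (k + 1 + 1)))
          + (G.coeff (0 + 1) : ℂ) * 2 ^ (0 + 1) * v ^ (m' + 1 - (0 + 1))
          + (G.coeff 0 : ℂ) * 2 ^ 0 * v ^ (m' + 1 - 0) := by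
          rw [← hS, ← Finset.mul_sum]
          simp only [Nat.add_sub_cancel, Nat.sub_zero, pow_zero, pow_one, zero_add, hc0, hc1]
          push_cast
          ring
      _ = 0 := hsum

private lemma taylor_map_eval' (P : Polynomial ℤ) (t : ℂ)
    (h : (P.map (Int.castRingHom ℂ)).eval t = 0) :
    (((Polynomial.taylor (2:ℤ) P).map (Int.castRingHom ℂ)).eval (t - 2)) = 0 := by
  rw [Polynomial.taylor_apply, Polynomial.map_comp, Polynomial.eval_comp]
  simp only [Polynomial.map_add, Polynomial.map_X, Polynomial.map_C, Polynomial.eval_add,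
    Polynomial.eval_X, Polynomial.eval_C, Polynomial.map_ofNat, Polynomial.eval_ofNat]
  rw [show (Int.castRingHom ℂ) 2 = (2:ℂ) from map_ofNat _ 2, show t - 2 + (2:ℂ) = t by ring]
  exact h

/-- The A-polynomial of the figure-eight knot, as a function on `ℂ × ℂ`. -/
noncomputable def A41 (L M : ℂ) : ℂ :=
  L ^ 2 * M ^ 4 + L * (-M ^ 8 - 1 + M ^ 6 + M ^ 2 + 2 * M ^ 4) + M ^ 4

/-- Theorem 1.1, case `q = 1`: the Reidemeister torsion of `p`-surgery on the
figure-eight knot is an algebraic integer. -/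
theorem torsion_p_surgery_isIntegral (p : ℤ) (hp : p ≠ 0) (s₀ : ℂ)
    (h0 : s₀ ≠ 0) (h1 : s₀ ≠ 1) (h2 : s₀ ≠ -1)
    (hA : A41 (s₀ ^ (-p)) s₀ = 0) :
    IsIntegral ℤ (2 * (s₀ ^ 2 - s₀ + 1) / (s₀ - 1) ^ 2) := by
  set n := p.natAbs with hn
  have hs1 : s₀ * s₀⁻¹ = 1 := mul_inv_cancel₀ h0
  have hL : s₀ ^ (-p) ≠ 0 := zpow_ne_zero _ h0
  have ha : s₀ ^ p = (s₀ ^ (-p))⁻¹ := by rw [zpow_neg, inv_inv]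
  unfold A41 at hA
  have key : s₀ ^ p + s₀ ^ (-p) = s₀ ^ 4 + s₀⁻¹ ^ 4 - s₀ ^ 2 - s₀⁻¹ ^ 2 - 2 := by
    rw [ha]
    generalize hB : s₀ ^ (-p) = B at hA hL ⊢
    field_simp
    linear_combination hA
  have hsn : s₀ ^ n + s₀⁻¹ ^ n = s₀ ^ 4 + s₀⁻¹ ^ 4 - s₀ ^ 2 - s₀⁻¹ ^ 2 - 2 := by
    rcases Int.natAbs_eq p with hpn | hpn
    · rw [hpn, zpow_neg, zpow_natCast, ← inv_pow] at key
      exact key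
    · rw [hpn, neg_neg, zpow_neg, zpow_natCast, ← inv_pow] at key
      linear_combination key
  set t : ℂ := s₀ + s₀⁻¹ with ht
  set F : Polynomial ℤ := Polynomial.dickson 1 1 n - (X ^ 4 - C 5 * X ^ 2 + C 2) with hF
  have hFt : (F.map (Int.castRingHom ℂ)).eval t = 0 := by
    rw [hF]
    simp only [Polynomial.map_sub, Polynomial.map_add, Polynomial.map_pow, Polynomial.map_mul,
      Polynomial.map_X, Polynomial.map_C, Polynomial.map_dickson]
    simp only [Polynomial.eval_sub, Polynomial.eval_add, Polynomial.eval_pow,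
      Polynomial.eval_mul, Polynomial.eval_X, Polynomial.eval_C, map_one]
    rw [Polynomial.dickson_one_one_eval_add_inv s₀ s₀⁻¹ hs1 n]
    rw [hsn]
    simp only [eq_intCast]
    push_cast
    linear_combination (-4*s₀^2 - 6*s₀*s₀⁻¹ - 4*s₀⁻¹^2 + 4) * hs1
  have hF2 : F.eval (2:ℤ) = 4 := by
    rw [hF]
    simp only [Polynomial.eval_sub, Polynomial.eval_add, Polynomial.eval_pow,
      Polynomial.eval_mul, Polynomial.eval_X, Polynomial.eval_C]
    rw [dickson_eval_two' n]
    norm_num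
  -- w := t - 2 is nonzero
  have hw : t - 2 ≠ 0 := by
    intro h
    apply h1
    have h' : (s₀ - 1) ^ 2 = s₀ * (t - 2) := by
      rw [ht]
      field_simp
      ring
    rw [h, mul_zero, pow_eq_zero_iff (two_ne_zero), sub_eq_zero] at h'
    exact h'
  set v : ℂ := 2 / (t - 2) with hv
  have hwv : (t - 2) * v = 2 := by
    rw [hv]
    field_simp
  -- the torsion equals v + 2
  have hτ : 2 * (s₀ ^ 2 - s₀ + 1) / (s₀ - 1) ^ 2 = v + 2 := by
    have hs1' : s₀ - 1 ≠ 0 := sub_ne_zero.mpr h1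
    have hsq : (s₀ - 1) ^ 2 ≠ 0 := pow_ne_zero _ hs1'
    have hww : t - 2 = (s₀ - 1) ^ 2 / s₀ := by
      rw [ht]
      field_simp
      ring
    rw [hv, hww, div_div_eq_mul_div]
    field_simp
    ring
  rw [hτ]
  have h2int : IsIntegral ℤ (2:ℂ) := ⟨Polynomial.X - Polynomial.C 2, Polynomial.monic_X_sub_C _,
    by simp⟩
  refine IsIntegral.add ?_ h2int
  -- main case split on parity of n
  rcases Nat.even_or_odd n with hne | hno
  · -- even case
    set G : Polynomial ℤ := Polynomial.taylor (2:ℤ) F with hG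
    have hGev : (G.map (Int.castRingHom ℂ)).eval (t - 2) = 0 := taylor_map_eval' F t hFt
    have hc0 : G.coeff 0 = 4 := by rw [hG, Polynomial.taylor_coeff_zero, hF2]
    obtain ⟨r, hr⟩ := hne
    have hder : (Polynomial.derivative F).eval 2 = (n:ℤ)^2 - 12 := by
      rw [hF]
      simp only [derivative_sub, derivative_add, Polynomial.derivative_C, derivative_mul,
        Polynomial.derivative_X_pow, Polynomial.eval_sub, Polynomial.eval_add,
        Polynomial.eval_mul, Polynomial.eval_pow, Polynomial.eval_X, Polynomial.eval_C,
        dickson_deriv_two' n]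
      norm_num
    have hc1 : G.coeff 1 = 2 * (2 * (r:ℤ) * r - 6) := by
      rw [hG, Polynomial.taylor_coeff_one, hder, hr]
      push_cast
      ring
    exact isIntegral_of_c0_four' G (t - 2) v _ hwv hGev hc0 hc1
  · -- odd case
    have hFneg2 : F.eval (-2:ℤ) = 0 := by
      have h := Polynomial.dickson_one_one_eval_add_inv (-1:ℤ) (-1) (by norm_num) n
      rw [show (-1:ℤ) + -1 = -2 by norm_num] at h
      rw [hF]
      simp only [Polynomial.eval_sub, Polynomial.eval_add, Polynomial.eval_pow,
        Polynomial.eval_mul, Polynomial.eval_X, Polynomial.eval_C]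
      rw [h, hno.neg_one_pow]
      norm_num
    have hdiv := Polynomial.modByMonic_add_div F (Polynomial.X - Polynomial.C (-2 : ℤ))
    rw [Polynomial.modByMonic_X_sub_C_eq_C_eval, hFneg2, Polynomial.C_0, zero_add] at hdiv
    set Ft : Polynomial ℤ := F /ₘ (Polynomial.X - Polynomial.C (-2)) with hFt'
    -- Ft.eval 2 = 1
    have hFt2 : Ft.eval (2:ℤ) = 1 := by
      have := congrArg (Polynomial.eval (2:ℤ)) hdiv
      simp only [Polynomial.eval_mul, Polynomial.eval_sub, Polynomial.eval_X,
        Polynomial.eval_C, hF2] at this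
      omega
    have hFtt : (Ft.map (Int.castRingHom ℂ)).eval t = 0 := by
      have hmap := congrArg (fun q => (Polynomial.map (Int.castRingHom ℂ) q).eval t) hdiv
      simp only [Polynomial.map_mul, Polynomial.map_sub, Polynomial.map_X, Polynomial.map_C,
        Polynomial.eval_mul, Polynomial.eval_sub, Polynomial.eval_X, Polynomial.eval_C] at hmap
      simp only [eq_intCast, Int.cast_neg, Int.cast_ofNat, sub_neg_eq_add] at hmap
      rw [hFt] at hmap
      have htne : t + 2 ≠ 0 := by
        intro h
        apply h2
        have h' : (s₀ + 1) ^ 2 = s₀ * (t + 2) := by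
          rw [ht]
          field_simp
          ring
        rw [h, mul_zero,
          pow_eq_zero_iff (two_ne_zero), ← eq_neg_iff_add_eq_zero] at h'
        exact h'
      rcases mul_eq_zero.mp hmap with h | h
      · exact absurd h htne
      · exact h
    set G : Polynomial ℤ := Polynomial.taylor (2:ℤ) Ft with hG
    have hGev : (G.map (Int.castRingHom ℂ)).eval (t - 2) = 0 := taylor_map_eval' Ft t hFtt
    have hc0 : G.coeff 0 = 1 := by rw [hG, Polynomial.taylor_coeff_zero, hFt2]
    exact isIntegral_of_c0_one' G (t - 2) v hwv hGev hc0
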